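/- arXiv:1806.08585 — 2 statements merged into one kernel-verified Lean document; each statement's English description precedes it below -/
import Mathlib

section
/- For every t ∈ ℝ and every s ∈ ℝ with s ≠ 0, the map (h,n) ↦ (h, s • n) is a group isomorphism from (E × F, *_t) (the law with parameter t) onto (E × F, *_{s t}) (the law with parameter s·t). In particular, for all t ≠ 0 the group (E × F, *_t) is isomorphic to (E × F, *_1), while (E × F, *_0) is the abelian group E × F with componentwise addition. (This realizes the ℝ*-action λ⁰_s(h,n,t) = (h, n/s, ts) as a family of group isomorphisms between the fibers, and shows all fibers over t ≠ 0 are isomorphic.) -/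
/-- for every `s ≠ 0`, the map `(h,n) ↦ (h, s • n)` is a group
isomorphism from `(E × F, *_t)` onto `(E × F, *_{s t})`; in particular all the
groups with `t ≠ 0` are isomorphic to the one with `t = 1`, while `*_0` is
componentwise addition. -/
theorem stmt_4 {E F : Type*} [AddCommGroup E] [Module ℝ E] [AddCommGroup F] [Module ℝ F]
    (L : E →ₗ[ℝ] E →ₗ[ℝ] F) (hL : ∀ h : E, L h h = 0)
    (mul : ℝ → E × F → E × F → E × F)
    (hmul : ∀ (t : ℝ) (p q : E × F),
      mul t p q = (p.1 + q.1, p.2 + q.2 + (t / 2) • L p.1 q.1))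
    (t s : ℝ) (hs : s ≠ 0)
    (f : E × F → E × F) (hf : ∀ p : E × F, f p = (p.1, s • p.2)) :
    Function.Bijective f ∧
    (∀ a b : E × F, f (mul t a b) = mul (s * t) (f a) (f b)) ∧
    (∀ a b : E × F, mul 0 a b = a + b) := by
  refine ⟨⟨?_, ?_⟩, ?_, ?_⟩
  · intro a b hab
    rw [hf, hf] at hab
    have h1 := congrArg Prod.fst hab
    have h2 := congrArg Prod.snd hab
    simp only at h1 h2
    have : a.2 = b.2 := by
      have := congrArg (fun x => s⁻¹ • x) h2
      simpa [smul_smul, inv_mul_cancel₀ hs] using this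
    exact Prod.ext h1 this
  · intro p
    refine ⟨(p.1, s⁻¹ • p.2), ?_⟩
    rw [hf]
    simp [smul_smul, mul_inv_cancel₀ hs]
  · intro a b
    rw [hf, hmul, hmul, hf, hf]
    simp only [smul_add, smul_smul]
    congr 2
    ring
  · intro a b
    rw [hmul]
    simp [Prod.ext_iff]
end

section
/- For all t, u ∈ ℝ, the operation (h₁,h₂,h₃) * (k₁,k₂,k₃) = (h₁+k₁, h₂+k₂+(t/2)•b₁₁ h₁ k₁, h₃+k₃+(t u/2)•(b₁₂ h₁ k₂ − b₁₂ k₁ h₂) + (t² u/12)•(b₁₂ h₁ (b₁₁ h₁ k₁) + b₁₂ k₁ (b₁₁ k₁ h₁))) makes V₁ × V₂ × V₃ a group, with identity (0,0,0) and with the inverse of (h₁,h₂,h₃) given by (−h₁,−h₂,−h₃). (This is the group law, asserted in the k = 2 remark of Section 6, of the fibers H¹ ⊕ H²/H¹ ⊕ TM/H² of the iterated deformation groupoid dnc³(M×M, M, H¹×{0}, H¹⊕H²/H¹×ℝ×{0}) for a two-step filtration H¹ ⊆ H² ⊆ TM, with b₁₁ and b₁₂ the graded components of the Levi bracket.) 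-/
/-- for all `t, u ∈ ℝ` the three-step Carnot law makes
`V₁ × V₂ × V₃` a group, with identity `(0,0,0)` and inverse of `(h₁,h₂,h₃)`
given by `(-h₁,-h₂,-h₃)`. -/
theorem stmt_9 {V₁ V₂ V₃ : Type*} [AddCommGroup V₁] [Module ℝ V₁]
    [AddCommGroup V₂] [Module ℝ V₂] [AddCommGroup V₃] [Module ℝ V₃]
    (b₁₁ : V₁ →ₗ[ℝ] V₁ →ₗ[ℝ] V₂) (hb₁₁ : ∀ x : V₁, b₁₁ x x = 0)
    (b₁₂ : V₁ →ₗ[ℝ] V₂ →ₗ[ℝ] V₃)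
    (hjac : ∀ x y z : V₁, b₁₂ x (b₁₁ y z) + b₁₂ y (b₁₁ z x) + b₁₂ z (b₁₁ x y) = 0)
    (t u : ℝ)
    (mul : V₁ × V₂ × V₃ → V₁ × V₂ × V₃ → V₁ × V₂ × V₃)
    (hmul : ∀ h k : V₁ × V₂ × V₃, mul h k =
      (h.1 + k.1,
       h.2.1 + k.2.1 + (t / 2) • b₁₁ h.1 k.1,
       h.2.2 + k.2.2 + (t * u / 2) • (b₁₂ h.1 k.2.1 - b₁₂ k.1 h.2.1)
         + (t ^ 2 * u / 12) • (b₁₂ h.1 (b₁₁ h.1 k.1) + b₁₂ k.1 (b₁₁ k.1 h.1)))) :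
    (∀ a b c : V₁ × V₂ × V₃, mul (mul a b) c = mul a (mul b c)) ∧
    (∀ a : V₁ × V₂ × V₃, mul ((0 : V₁), (0 : V₂), (0 : V₃)) a = a) ∧
    (∀ a : V₁ × V₂ × V₃, mul a ((0 : V₁), (0 : V₂), (0 : V₃)) = a) ∧
    (∀ a : V₁ × V₂ × V₃,
      mul a (-a.1, -a.2.1, -a.2.2) = ((0 : V₁), (0 : V₂), (0 : V₃)) ∧
      mul (-a.1, -a.2.1, -a.2.2) a = ((0 : V₁), (0 : V₂), (0 : V₃))) := by
  have hskew : ∀ x y : V₁, b₁₁ x y = - b₁₁ y x := by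
    intro x y
    have h := hb₁₁ (x + y)
    simp only [map_add, LinearMap.add_apply, hb₁₁] at h
    have h2 : b₁₁ x y + b₁₁ y x = 0 := by rw [← h]; abel
    exact eq_neg_of_add_eq_zero_left h2
  refine ⟨?_, ?_, ?_, ?_⟩
  · intro a b c
    simp only [hmul]
    refine Prod.ext (by abel_nf) (Prod.ext ?_ ?_)
    · simp only [map_add, LinearMap.add_apply, map_smul, LinearMap.smul_apply]
      module
    · simp only [map_add, LinearMap.add_apply, map_smul, LinearMap.smul_apply, map_sub,
        LinearMap.sub_apply, map_neg, LinearMap.neg_apply]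
      have hs1 : b₁₂ b.1 (b₁₁ c.1 a.1) = - b₁₂ b.1 (b₁₁ a.1 c.1) := by
        rw [hskew c.1 a.1, map_neg]
      have hs2 : b₁₂ c.1 (b₁₁ a.1 b.1) = - b₁₂ c.1 (b₁₁ b.1 a.1) := by
        rw [hskew a.1 b.1, map_neg]
      linear_combination (norm := module) (-(t ^ 2 * u / 6)) • hjac a.1 b.1 c.1 +
        (t ^ 2 * u / 12) • hs1 + (-(t ^ 2 * u / 12)) • hs2
  · intro a
    simp only [hmul, map_zero, LinearMap.zero_apply, zero_smul, zero_add, add_zero, smul_zero,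
      hb₁₁, sub_zero, map_zero]
  · intro a
    simp only [hmul, map_zero, LinearMap.zero_apply, zero_smul, zero_add, add_zero, smul_zero,
      hb₁₁, sub_zero, map_zero]
  · intro a
    constructor <;>
    · simp only [hmul, map_neg, LinearMap.neg_apply, map_smul, hb₁₁, neg_neg, smul_zero,
        map_zero, neg_zero]
      refine Prod.ext (by abel_nf) (Prod.ext (by simp) ?_)
      module
end
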